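/- Let U ⊆ ℂ be a nonempty open connected set and let f_1,…,f_m : U → ℂ be holomorphic functions that are linearly independent over ℂ. Then the m² functions h_{ij} : U → ℂ defined by h_{ij}(z) = f_i(z) · conj(f_j(z)), for 1 ≤ i, j ≤ m, are linearly independent over ℂ. -/

import Mathlib

open Complex Filter Set Topology

lemma aux_hasDerivAt_conj_conj {f : ℂ → ℂ} {d w : ℂ}
    (h : HasDerivAt f d ((starRingEnd ℂ) w)) :
    HasDerivAt (fun z => (starRingEnd ℂ) (f ((starRingEnd ℂ) z))) ((starRingEnd ℂ) d) w := by
  rw [hasDerivAt_iff_tendsto_slope] at h ⊢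
  have hconj : Tendsto (fun z => (starRingEnd ℂ) z) (𝓝[≠] w) (𝓝[≠] ((starRingEnd ℂ) w)) := by
    apply tendsto_nhdsWithin_of_tendsto_nhds_of_eventually_within
    · exact (Complex.continuous_conj.tendsto w).mono_left nhdsWithin_le_nhds
    · filter_upwards [eventually_mem_nhdsWithin] with z hz
      simp only [Set.mem_compl_iff, Set.mem_singleton_iff] at hz ⊢
      intro hzz
      exact hz (by simpa using congrArg (starRingEnd ℂ) hzz)
  have key : (slope (fun z => (starRingEnd ℂ) (f ((starRingEnd ℂ) z))) w)
      = fun z => (starRingEnd ℂ) (slope f ((starRingEnd ℂ) w) ((starRingEnd ℂ) z)) := by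
    funext z
    simp [slope_def_field, map_div₀, map_sub]
  rw [key]
  exact (Complex.continuous_conj.tendsto d).comp (h.comp hconj)

lemma aux_freq {p : ℂ → Prop} {a v : ℂ} (hv : v ≠ 0) {s : ℝ} (hs : 0 < s)
    (hp : ∀ t : ℝ, 0 < t → t ≤ s → p (a + t • v)) : ∃ᶠ z in 𝓝[≠] a, p z := by
  have htend : Tendsto (fun n : ℕ => a + ((s * (1 / (n + 1 : ℝ))) : ℝ) • v) atTop (𝓝[≠] a) := by
    apply tendsto_nhdsWithin_of_tendsto_nhds_of_eventually_within
    · have h1 : Tendsto (fun n : ℕ => s * (1 / (n + 1 : ℝ))) atTop (𝓝 0) := by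
        simpa using (tendsto_one_div_add_atTop_nhds_zero_nat.const_mul s)
      have h2 : Tendsto (fun n : ℕ => ((s * (1 / (n + 1 : ℝ))) : ℝ) • v) atTop (𝓝 0) := by
        simpa using h1.smul_const v
      simpa using (tendsto_const_nhds.add h2)
    · apply Filter.Eventually.of_forall
      intro n
      have hpos : (0:ℝ) < s * (1 / (n + 1 : ℝ)) := by positivity
      simp only [Set.mem_compl_iff, Set.mem_singleton_iff]
      intro hcontra
      have h0 : ((s * (1 / (n + 1 : ℝ))) : ℝ) • v = 0 := by
        have := congrArg (fun x => x - a) hcontra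
        simpa using this
      rcases smul_eq_zero.mp h0 with h | h
      · exact absurd h (ne_of_gt hpos)
      · exact hv h
  apply htend.frequently
  apply Filter.Frequently.of_forall
  intro n
  apply hp
  · positivity
  · have h1 : (1 : ℝ) / (n + 1 : ℝ) ≤ 1 := by
      rw [div_le_one (by positivity)]
      linarith
    nlinarith

/-- If `f_1, …, f_m` are linearly independent holomorphic functions on a
connected open set `U ⊆ ℂ`, then the `m²` functions `z ↦ f_i(z) * conj (f_j(z))` are
linearly independent over `ℂ`. -/
theorem stmt_8 {U : Set ℂ} (hU : IsOpen U) (hUc : IsConnected U)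
    {m : ℕ} (f : Fin m → ℂ → ℂ) (hf : ∀ i, DifferentiableOn ℂ (f i) U)
    (hind : LinearIndependent ℂ fun i => U.restrict (f i)) :
    LinearIndependent ℂ fun ij : Fin m × Fin m =>
      U.restrict fun z => f ij.1 z * (starRingEnd ℂ) (f ij.2 z) := by
  classical
  rw [Fintype.linearIndependent_iff]
  intro c hc
  -- pointwise vanishing of the combination
  have hH : ∀ z ∈ U,
      (∑ ij : Fin m × Fin m, c ij * (f ij.1 z * (starRingEnd ℂ) (f ij.2 z))) = 0 := by
    intro z hz
    have h1 := congrFun hc ⟨z, hz⟩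
    simpa [Finset.sum_apply, Set.restrict] using h1
  obtain ⟨z0, hz0⟩ := hUc.nonempty
  obtain ⟨r, hr, hball⟩ := Metric.isOpen_iff.mp hU z0 hz0
  -- differentiability of the shifted functions
  have hF : ∀ (i : Fin m) (a : ℂ) (s : ℝ), Metric.ball a s ⊆ U →
      DifferentiableOn ℂ (fun ζ => f i (a + ζ)) (Metric.ball (0:ℂ) s) := by
    intro i a s hsub ζ hζ
    have h1 : a + ζ ∈ U := by
      apply hsub
      rw [Metric.mem_ball, dist_eq_norm, add_sub_cancel_left]
      simpa [mem_ball_zero_iff] using hζ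
    have h2 : DifferentiableAt ℂ (f i) (a + ζ) := (hf i).differentiableAt (hU.mem_nhds h1)
    exact (h2.comp ζ ((differentiable_id.const_add a) ζ)).differentiableWithinAt
  have hg : ∀ (j : Fin m) (a : ℂ) (s : ℝ), Metric.ball a s ⊆ U →
      DifferentiableOn ℂ (fun η => (starRingEnd ℂ) (f j (a + (starRingEnd ℂ) η)))
        (Metric.ball (0:ℂ) s) := by
    intro j a s hsub η hη
    have hcη : (starRingEnd ℂ) η ∈ Metric.ball (0:ℂ) s := by
      simpa [mem_ball_zero_iff] using (mem_ball_zero_iff.mp hη)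
    have h1 : a + (starRingEnd ℂ) η ∈ U := by
      apply hsub
      rw [Metric.mem_ball, dist_eq_norm, add_sub_cancel_left]
      simpa [mem_ball_zero_iff] using hcη
    have h2 : DifferentiableAt ℂ (fun z => f j (a + z)) ((starRingEnd ℂ) η) := by
      have h3 : DifferentiableAt ℂ (f j) (a + (starRingEnd ℂ) η) :=
        (hf j).differentiableAt (hU.mem_nhds h1)
      exact h3.comp _ ((differentiable_id.const_add a) _)
    exact (aux_hasDerivAt_conj_conj (h2.hasDerivAt)).differentiableAt.differentiableWithinAt
  -- Claim 1 : polarization along the diagonal at each center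
  have claim1 : ∀ a ∈ U, ∀ s : ℝ, 0 < s → Metric.ball a s ⊆ U →
      ∀ ζ ∈ Metric.ball (0:ℂ) s,
        (∑ ij : Fin m × Fin m,
          c ij * (f ij.1 (a + ζ) * (starRingEnd ℂ) (f ij.2 (a + (starRingEnd ℂ) ζ)))) = 0 := by
    intro a ha s hs hsub
    have hΦ : DifferentiableOn ℂ (fun ζ => ∑ ij : Fin m × Fin m,
        c ij * (f ij.1 (a + ζ) * (starRingEnd ℂ) (f ij.2 (a + (starRingEnd ℂ) ζ))))
        (Metric.ball (0:ℂ) s) := by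
      apply DifferentiableOn.fun_sum
      intro ij _
      exact ((hF ij.1 a s hsub).mul (hg ij.2 a s hsub)).const_mul _
    have hzero := (hΦ.analyticOnNhd Metric.isOpen_ball).eqOn_zero_of_preconnected_of_frequently_eq_zero
      ((convex_ball (0:ℂ) s).isPreconnected) (Metric.mem_ball_self hs) ?_
    · intro ζ hζ
      exact hzero hζ
    · apply aux_freq (v := (1:ℂ)) one_ne_zero (half_pos hs)
      intro t ht hts
      have hmem : a + (t:ℂ) ∈ U := by
        apply hsub
        rw [Metric.mem_ball, dist_eq_norm, add_sub_cancel_left]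
        rw [Complex.norm_real, Real.norm_eq_abs, abs_of_pos ht]
        linarith
      have h1 := hH (a + (t:ℂ)) hmem
      have e : (0:ℂ) + t • (1:ℂ) = (t:ℂ) := by
        simp [Complex.real_smul]
      rw [e]
      simpa [Complex.conj_ofReal] using h1
  -- Claim 2 : full separation of variables near z0
  have claim2 : ∀ u ∈ Metric.ball (0:ℂ) (r/4), ∀ η ∈ Metric.ball (0:ℂ) r,
      (∑ ij : Fin m × Fin m,
        c ij * (f ij.1 (z0 + u) * (starRingEnd ℂ) (f ij.2 (z0 + (starRingEnd ℂ) η)))) = 0 := by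
    intro u hu
    have hunorm : ‖u‖ < r/4 := mem_ball_zero_iff.mp hu
    have hψ : DifferentiableOn ℂ (fun η => ∑ ij : Fin m × Fin m,
        c ij * (f ij.1 (z0 + u) * (starRingEnd ℂ) (f ij.2 (z0 + (starRingEnd ℂ) η))))
        (Metric.ball (0:ℂ) r) := by
      apply DifferentiableOn.fun_sum
      intro ij _
      exact (((hg ij.2 z0 r hball).const_mul _).const_mul _)
    have huD : u ∈ Metric.ball (0:ℂ) r := by
      rw [mem_ball_zero_iff]; linarith
    have hzero := (hψ.analyticOnNhd Metric.isOpen_ball).eqOn_zero_of_preconnected_of_frequently_eq_zero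
      ((convex_ball (0:ℂ) r).isPreconnected) huD ?_
    · intro η hη
      exact hzero hη
    · apply aux_freq (v := (-2) * Complex.I) (by simp [Complex.ext_iff]) (show (0:ℝ) < r/8 by linarith)
      intro t ht hts
      have hIt : ‖Complex.I * (t:ℂ)‖ = t := by
        rw [norm_mul, Complex.norm_I, Complex.norm_real, one_mul, Real.norm_eq_abs, abs_of_pos ht]
      have hsub2 : Metric.ball (z0 + Complex.I * (t:ℂ)) (r/2) ⊆ U := by
        refine subset_trans (Metric.ball_subset_ball' ?_) hball
        rw [dist_eq_norm, add_sub_cancel_left, hIt]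
        linarith
      have hmem2 : z0 + Complex.I * (t:ℂ) ∈ U := hsub2 (Metric.mem_ball_self (by linarith))
      have hζmem : u - Complex.I * (t:ℂ) ∈ Metric.ball (0:ℂ) (r/2) := by
        rw [mem_ball_zero_iff]
        calc ‖u - Complex.I * (t:ℂ)‖ ≤ ‖u‖ + ‖Complex.I * (t:ℂ)‖ := norm_sub_le _ _
          _ < r/2 := by rw [hIt]; linarith
      have key := claim1 (z0 + Complex.I * (t:ℂ)) hmem2 (r/2) (by linarith) hsub2
        (u - Complex.I * (t:ℂ)) hζmem
      have e1 : z0 + Complex.I * (t:ℂ) + (u - Complex.I * (t:ℂ)) = z0 + u := by ring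
      have e2 : z0 + Complex.I * (t:ℂ) + (starRingEnd ℂ) (u - Complex.I * (t:ℂ))
          = z0 + (starRingEnd ℂ) (u + t • ((-2) * Complex.I)) := by
        simp only [map_sub, map_add, map_mul, Complex.conj_I, Complex.conj_ofReal,
          Complex.real_smul, map_neg, map_ofNat]
        ring
      rw [e1, e2] at key
      exact key
  -- Claim 3 : coefficients against second family vanish
  have claim3 : ∀ j : Fin m, ∀ u ∈ Metric.ball (0:ℂ) (r/4),
      (∑ i : Fin m, c (i,j) * f i (z0 + u)) = 0 := by
    intro j u hu
    have hG : ∀ w ∈ U,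
        (∑ jj : Fin m, (∑ i : Fin m, (starRingEnd ℂ) (c (i,jj) * f i (z0 + u))) * f jj w) = 0 := by
      have hdiff : DifferentiableOn ℂ
          (fun w => ∑ jj : Fin m, (∑ i : Fin m, (starRingEnd ℂ) (c (i,jj) * f i (z0 + u))) * f jj w)
          U := by
        apply DifferentiableOn.fun_sum
        intro jj _
        exact (hf jj).const_mul _
      have hzball : ∀ w ∈ Metric.ball z0 r,
          (∑ jj : Fin m, (∑ i : Fin m, (starRingEnd ℂ) (c (i,jj) * f i (z0 + u))) * f jj w) = 0 := by
        intro w hw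
        have hη : (starRingEnd ℂ) (w - z0) ∈ Metric.ball (0:ℂ) r := by
          rw [mem_ball_zero_iff]
          rw [RCLike.norm_conj]
          simpa [Metric.mem_ball, dist_eq_norm] using hw
        have key := claim2 u hu ((starRingEnd ℂ) (w - z0)) hη
        have key' : (∑ ij : Fin m × Fin m,
            c ij * (f ij.1 (z0 + u) * (starRingEnd ℂ) (f ij.2 w))) = 0 := by
          simpa [Complex.conj_conj] using key
        have hcon := congrArg (starRingEnd ℂ) key'
        rw [map_sum, map_zero] at hcon
        simp only [map_mul, Complex.conj_conj] at hcon
        calc (∑ jj : Fin m, (∑ i : Fin m, (starRingEnd ℂ) (c (i,jj) * f i (z0 + u))) * f jj w)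
            = ∑ jj : Fin m, ∑ i : Fin m,
                (starRingEnd ℂ) (c (i,jj)) * ((starRingEnd ℂ) (f i (z0 + u)) * f jj w) := by
              simp [Finset.sum_mul, map_mul, mul_assoc]
          _ = ∑ ij : Fin m × Fin m,
                (starRingEnd ℂ) (c ij) * ((starRingEnd ℂ) (f ij.1 (z0 + u)) * f ij.2 w) := by
              rw [Fintype.sum_prod_type]
              exact Finset.sum_comm
          _ = 0 := hcon
      have hEq := (hdiff.analyticOnNhd hU).eqOn_zero_of_preconnected_of_eventuallyEq_zero
        hUc.isPreconnected hz0
        (Filter.eventuallyEq_of_mem (Metric.ball_mem_nhds z0 hr) hzball)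
      intro w hw
      exact hEq hw
    have hsum0 : (∑ jj : Fin m,
        (∑ i : Fin m, (starRingEnd ℂ) (c (i,jj) * f i (z0 + u))) • U.restrict (f jj)) = 0 := by
      funext w
      have := hG w.1 w.2
      simpa [Finset.sum_apply, Set.restrict] using this
    have hb := Fintype.linearIndependent_iff.mp hind _ hsum0 j
    have hcon := congrArg (starRingEnd ℂ) hb
    rw [map_sum, map_zero] at hcon
    simpa [Complex.conj_conj, map_mul] using hcon
  -- Final step
  have claim4 : ∀ j i : Fin m, c (i,j) = 0 := by
    intro j
    have hdiff : DifferentiableOn ℂ (fun w => ∑ i : Fin m, c (i,j) * f i w) U := by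
      apply DifferentiableOn.fun_sum
      intro i _
      exact (hf i).const_mul _
    have hzball : ∀ w ∈ Metric.ball z0 (r/4),
        (∑ i : Fin m, c (i,j) * f i w) = 0 := by
      intro w hw
      have hu : w - z0 ∈ Metric.ball (0:ℂ) (r/4) := by
        rw [mem_ball_zero_iff]
        simpa [Metric.mem_ball, dist_eq_norm] using hw
      have := claim3 j (w - z0) hu
      simpa using this
    have hEq := (hdiff.analyticOnNhd hU).eqOn_zero_of_preconnected_of_eventuallyEq_zero
      hUc.isPreconnected hz0
      (Filter.eventuallyEq_of_mem (Metric.ball_mem_nhds z0 (by linarith)) hzball)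
    intro i
    have hsum0 : (∑ i' : Fin m, (c (i',j)) • U.restrict (f i')) = 0 := by
      funext w
      have := hEq w.2
      simpa [Finset.sum_apply, Set.restrict] using this
    exact Fintype.linearIndependent_iff.mp hind _ hsum0 i
  intro ij
  have := claim4 ij.2 ij.1
  simpa using this
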